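/- The multi-sample Jensen lower bounds are monotone nondecreasing in the number of samples: for every integer n ≥ 1, L_n ≤ L_{n+1}. -/

import Mathlib

open Finset

/-- The multi-sample Jensen lower bounds are monotone nondecreasing in the number of samples:
for every integer `n ≥ 1`, `L_n ≤ L_{n+1}`. -/
theorem multi_sample_jensen_lower_bound_monotone
    {C : Type*} [Fintype C] [Nonempty C]
    (p ρ : C → ℝ)
    (hp0 : ∀ c, 0 ≤ p c) (hp1 : ∑ c, p c = 1)
    (hρ0 : ∀ c, 0 < ρ c) (hρ1 : ∀ c, ρ c ≤ 1)
    (n : ℕ) (hn : 1 ≤ n) :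
    ∑ cs : Fin n → C, (∏ i, p (cs i)) * Real.log ((1 / (n : ℝ)) * ∑ i, ρ (cs i)) ≤
      ∑ cs : Fin (n + 1) → C,
        (∏ i, p (cs i)) * Real.log ((1 / ((n : ℝ) + 1)) * ∑ i, ρ (cs i)) := by
  classical
  have hnpos : (0:ℝ) < n := by exact_mod_cast hn
  have hn1pos : (0:ℝ) < (n:ℝ) + 1 := by positivity
  set Ln : ℝ := ∑ cs : Fin n → C, (∏ i, p (cs i)) * Real.log ((1 / (n : ℝ)) * ∑ i, ρ (cs i))
    with hLn
  -- Step D: marginalizing out coordinate j gives Ln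
  have stepD : ∀ j : Fin (n+1),
      ∑ cs : Fin (n+1) → C, (∏ i, p (cs i)) *
        Real.log ((1 / (n:ℝ)) * ∑ i : Fin n, ρ (cs (j.succAbove i))) = Ln := by
    intro j
    rw [← (Fin.insertNthEquiv (fun _ => C) j).sum_comp]
    rw [Fintype.sum_prod_type]
    have key : ∀ (x : C) (g : Fin n → C),
        (∏ i, p ((Fin.insertNthEquiv (fun _ => C) j) (x, g) i)) *
          Real.log ((1 / (n:ℝ)) *
            ∑ i : Fin n, ρ (((Fin.insertNthEquiv (fun _ => C) j) (x, g)) (j.succAbove i)))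
        = p x * ((∏ i, p (g i)) * Real.log ((1 / (n:ℝ)) * ∑ i, ρ (g i))) := by
      intro x g
      set cs0 : Fin (n+1) → C := Fin.insertNth (α := fun _ => C) j x g with hcs0
      have hce : (Fin.insertNthEquiv (fun _ => C) j) (x, g) = cs0 := rfl
      have h1 : ∏ i, p (cs0 i) = p x * ∏ i, p (g i) := by
        rw [Fin.prod_univ_succAbove (fun i => p (cs0 i)) j]
        simp [hcs0, Fin.insertNth_apply_same, Fin.insertNth_apply_succAbove]
      have h2 : ∀ i : Fin n, cs0 (j.succAbove i) = g i := by
        intro i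
        rw [hcs0]
        exact Fin.insertNth_apply_succAbove (α := fun _ => C) j x g i
      simp only [hce, h1, h2]
      ring
    simp only [key]
    rw [← Finset.sum_mul_sum]
    rw [hp1, one_mul, hLn]
  -- Step A: pointwise Jensen
  have stepA : ∀ cs : Fin (n+1) → C,
      (1 / ((n:ℝ) + 1)) * ∑ j : Fin (n+1),
        Real.log ((1 / (n:ℝ)) * ∑ i : Fin n, ρ (cs (j.succAbove i))) ≤
      Real.log ((1 / ((n:ℝ) + 1)) * ∑ i, ρ (cs i)) := by
    intro cs
    have hcard : ((n:ℝ) + 1) ≠ 0 := ne_of_gt hn1pos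
    have hJ := (strictConcaveOn_log_Ioi.concaveOn).le_map_sum
      (t := Finset.univ) (w := fun _ : Fin (n+1) => 1 / ((n:ℝ)+1))
      (p := fun j : Fin (n+1) => (1 / (n:ℝ)) * ∑ i : Fin n, ρ (cs (j.succAbove i)))
      (fun i _ => by positivity)
      (by simp [Finset.card_univ]; field_simp)
      (fun j _ => by
        have : (0:ℝ) < ∑ i : Fin n, ρ (cs (j.succAbove i)) := by
          apply Finset.sum_pos (fun i _ => hρ0 _)
          simpa [Finset.univ_nonempty_iff] using Fin.pos_iff_nonempty.mp hn
        exact Set.mem_Ioi.mpr (by positivity))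
    have hmean : ∑ j : Fin (n+1), (1 / ((n:ℝ)+1)) •
        ((1 / (n:ℝ)) * ∑ i : Fin n, ρ (cs (j.succAbove i)))
        = (1 / ((n:ℝ) + 1)) * ∑ i, ρ (cs i) := by
      have hsplit : ∀ j : Fin (n+1),
          ∑ i : Fin n, ρ (cs (j.succAbove i)) = (∑ i, ρ (cs i)) - ρ (cs j) := by
        intro j
        have := Fin.sum_univ_succAbove (fun i => ρ (cs i)) j
        linarith
      simp only [hsplit, smul_eq_mul, mul_sub, Finset.sum_sub_distrib,
        Finset.sum_const, Finset.card_univ, Fintype.card_fin, nsmul_eq_mul,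
        ← Finset.mul_sum]
      have hne : (n:ℝ) ≠ 0 := ne_of_gt hnpos
      field_simp
      push_cast
      ring
    rw [hmean] at hJ
    calc (1 / ((n:ℝ) + 1)) * ∑ j : Fin (n+1),
          Real.log ((1 / (n:ℝ)) * ∑ i : Fin n, ρ (cs (j.succAbove i)))
        = ∑ j : Fin (n+1), (1 / ((n:ℝ)+1)) •
            Real.log ((1 / (n:ℝ)) * ∑ i : Fin n, ρ (cs (j.succAbove i))) := by
          rw [Finset.mul_sum]; simp [smul_eq_mul]
      _ ≤ _ := hJ
  -- Combine
  have hW : ∀ cs : Fin (n+1) → C, 0 ≤ ∏ i, p (cs i) :=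
    fun cs => Finset.prod_nonneg (fun i _ => hp0 _)
  have stepB : ∑ cs : Fin (n+1) → C, (∏ i, p (cs i)) *
        ((1 / ((n:ℝ) + 1)) * ∑ j : Fin (n+1),
          Real.log ((1 / (n:ℝ)) * ∑ i : Fin n, ρ (cs (j.succAbove i)))) ≤
      ∑ cs : Fin (n + 1) → C,
        (∏ i, p (cs i)) * Real.log ((1 / ((n : ℝ) + 1)) * ∑ i, ρ (cs i)) :=
    Finset.sum_le_sum (fun cs _ => mul_le_mul_of_nonneg_left (stepA cs) (hW cs))
  refine le_trans ?_ stepB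
  -- remaining: Ln ≤ LHS of stepB; in fact equality
  have : ∑ cs : Fin (n+1) → C, (∏ i, p (cs i)) *
        ((1 / ((n:ℝ) + 1)) * ∑ j : Fin (n+1),
          Real.log ((1 / (n:ℝ)) * ∑ i : Fin n, ρ (cs (j.succAbove i)))) = Ln := by
    simp only [Finset.mul_sum]
    rw [Finset.sum_comm]
    have hre : ∀ (j : Fin (n+1)) (cs : Fin (n+1) → C),
        (∏ i, p (cs i)) * ((1 / ((n:ℝ) + 1)) *
          Real.log ((1 / (n:ℝ)) * ∑ i : Fin n, ρ (cs (j.succAbove i))))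
        = (1 / ((n:ℝ) + 1)) * ((∏ i, p (cs i)) *
          Real.log ((1 / (n:ℝ)) * ∑ i : Fin n, ρ (cs (j.succAbove i)))) := by
      intro j cs; ring
    simp only [hre, ← Finset.mul_sum]
    simp only [stepD]
    rw [Finset.sum_const, Finset.card_univ, Fintype.card_fin, nsmul_eq_mul]
    field_simp
    push_cast
    ring
  rw [this]
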